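/- Let x be a nonzero complex number and (λ_n) a sequence of nonzero complex numbers such that for some θ < 1 and all sufficiently large n, |(λ_n−x)/λ_n| ≤ θ. Then the series ∑_{n≥0} ((λ₁−x)⋯(λ_n−x))/(λ₁⋯λ_n·λ_{n+1}) converges absolutely and its sum equals 1/x. -/

import Mathlib

open Finset Filter

set_option maxHeartbeats 1000000 in
theorem stmt2 (x : ℂ) (hx : x ≠ 0) (lam : ℕ → ℂ) (hlam : ∀ n, lam n ≠ 0)
    (θ : ℝ) (hθ : θ < 1) (N : ℕ)
    (hbound : ∀ n ≥ N, ‖(lam n - x) / lam n‖ ≤ θ) :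
    Summable (fun n => ‖(∏ i ∈ Finset.range n, (lam i - x)) /
        ((∏ i ∈ Finset.range n, lam i) * lam n)‖) ∧
      ∑' n : ℕ, (∏ i ∈ Finset.range n, (lam i - x)) /
          ((∏ i ∈ Finset.range n, lam i) * lam n) = 1 / x := by
  set a : ℕ → ℂ := fun n => ∏ i ∈ Finset.range n, ((lam i - x) / lam i) with ha
  set f : ℕ → ℂ := fun n => (∏ i ∈ Finset.range n, (lam i - x)) /
      ((∏ i ∈ Finset.range n, lam i) * lam n) with hf
  have hxn : (0 : ℝ) < ‖x‖ := norm_pos_iff.2 hx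
  have hθ0 : 0 ≤ θ := le_trans (norm_nonneg _) (hbound N le_rfl)
  have hterm : ∀ n, f n = a n / lam n := by
    intro n
    simp only [hf, ha, Finset.prod_div_distrib, div_div]
  have hanorm : ∀ n, N ≤ n → ‖a n‖ ≤ ‖a N‖ * θ ^ (n - N) := by
    intro n hn
    have h1 : a n = a N * ∏ i ∈ Finset.Ico N n, ((lam i - x) / lam i) := by
      simp only [ha]
      rw [Finset.prod_range_mul_prod_Ico _ hn]
    rw [h1, norm_mul]
    gcongr
    calc ‖∏ i ∈ Finset.Ico N n, ((lam i - x) / lam i)‖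
        ≤ ∏ i ∈ Finset.Ico N n, ‖(lam i - x) / lam i‖ := norm_prod_le _ _
      _ ≤ ∏ _i ∈ Finset.Ico N n, θ := by
          apply Finset.prod_le_prod (fun i _ => norm_nonneg _)
          intro i hi
          exact hbound i (Finset.mem_Ico.1 hi).1
      _ = θ ^ (n - N) := by rw [Finset.prod_const, Nat.card_Ico]
  have hlamx : ∀ n, N ≤ n → ‖x / lam n‖ ≤ 1 + θ := by
    intro n hn
    have h1 : x / lam n = 1 - (lam n - x) / lam n := by
      rw [eq_sub_iff_add_eq, ← add_div, add_sub_cancel, div_self (hlam n)]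
    rw [h1]
    calc ‖1 - (lam n - x) / lam n‖ ≤ ‖(1 : ℂ)‖ + ‖(lam n - x) / lam n‖ := norm_sub_le _ _
      _ ≤ 1 + θ := by
          rw [norm_one]
          exact add_le_add le_rfl (hbound n hn)
  have hfbound : ∀ n, N ≤ n → ‖f n‖ ≤ (‖a N‖ * (1 + θ) / ‖x‖) * θ ^ (n - N) := by
    intro n hn
    have h1 : f n = a n * (x / lam n) / x := by
      rw [hterm n, eq_div_iff hx]
      field_simp
    rw [h1, norm_div, norm_mul, div_le_iff₀ hxn]
    calc ‖a n‖ * ‖x / lam n‖ ≤ (‖a N‖ * θ ^ (n - N)) * (1 + θ) :=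
        mul_le_mul (hanorm n hn) (hlamx n hn) (norm_nonneg _) (by positivity)
      _ = ‖a N‖ * (1 + θ) / ‖x‖ * θ ^ (n - N) * ‖x‖ := by
          rw [div_mul_eq_mul_div, div_mul_eq_mul_div, mul_div_cancel_right₀ _ hxn.ne']
          ring
  have hsumnorm : Summable (fun n => ‖f n‖) := by
    rw [← summable_nat_add_iff N]
    refine Summable.of_nonneg_of_le (fun n => norm_nonneg _) (fun n => ?_)
      ((summable_geometric_of_lt_one hθ0 hθ).mul_left (‖a N‖ * (1 + θ) / ‖x‖))
    have h := hfbound (n + N) (Nat.le_add_left N n)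
    simpa using h
  refine ⟨hsumnorm, ?_⟩
  have hsummable : Summable f := hsumnorm.of_norm
  have htel : ∀ n, x * f n = a n - a (n + 1) := by
    intro n
    rw [hterm]
    have h2 : a (n + 1) = a n * ((lam n - x) / lam n) := by
      simp only [ha]
      rw [Finset.prod_range_succ]
    rw [h2]
    have := hlam n
    field_simp
    ring
  have hpartial : ∀ m, ∑ i ∈ Finset.range m, f i = (1 - a m) / x := by
    intro m
    have h1 : x * ∑ i ∈ Finset.range m, f i = 1 - a m := by
      rw [Finset.mul_sum]
      simp only [htel]
      rw [Finset.sum_range_sub' a m]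
      simp [ha]
    rw [eq_div_iff hx, ← h1]
    ring
  have ha0 : Tendsto a atTop (nhds 0) := by
    have hb : ∀ᶠ n in atTop, ‖a n‖ ≤ ‖a N‖ * θ ^ (n - N) := by
      filter_upwards [eventually_ge_atTop N] with n hn using hanorm n hn
    have h1 : Tendsto (fun n : ℕ => θ ^ (n - N)) atTop (nhds 0) :=
      (tendsto_pow_atTop_nhds_zero_of_lt_one hθ0 hθ).comp
        (tendsto_sub_atTop_nat N)
    have hg : Tendsto (fun n : ℕ => ‖a N‖ * θ ^ (n - N)) atTop (nhds 0) := by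
      simpa using h1.const_mul (‖a N‖)
    exact squeeze_zero_norm' hb hg
  have hlim : Tendsto (fun m => ∑ i ∈ Finset.range m, f i) atTop (nhds (1 / x)) := by
    simp only [hpartial]
    have h2 : Tendsto (fun m => (1 - a m) / x) atTop (nhds ((1 - 0) / x)) :=
      (tendsto_const_nhds.sub ha0).div_const x
    simpa using h2
  exact tendsto_nhds_unique hsummable.hasSum.tendsto_sum_nat hlim
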